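/- Let t be a real inner product space, ν ∈ t*, and for α ∈ t* with α♯ ≠ 0 define r_{(α,0)}(z,h,t) = (z,h,t) - (α(h)+t·ν(α♯))·(-ν(α∨), α∨, 0) on ℝ × t × ℝ. Then for any α₁,…,α_n, r_{(α_n,0)}⋯r_{(α_1,0)}(z,h,t) - (z,h,t) = (ν(F), -F, 0), where F = f_ν^{α₁,…,α_n}(z,h,t) = Σ_{s=1}^n (α_s(h)+t·ν(α_s♯)) · r_{α_n}⋯r_{α_{s+1}}(α_s∨) and r_β(x) = x - β(x)β∨. -/

import Mathlib

open Finset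

private lemma word_action_aux {E : Type*} [NormedAddCommGroup E] [InnerProductSpace ℝ E]
    (αs : ℕ → (E →ₗ[ℝ] ℝ)) (ν : E →ₗ[ℝ] ℝ) (sharps cor : ℕ → E)
    (refl : ℕ → E → E) (hrefl : ∀ s (x : E), refl s x = x - αs s x • cor s)
    (R : ℕ → ℝ × E × ℝ → ℝ × E × ℝ)
    (hR : ∀ s (p : ℝ × E × ℝ), R s p =
      p - (αs s p.2.1 + p.2.2 * ν (sharps s)) • ((-(ν (cor s)), cor s, 0) : ℝ × E × ℝ)) :
    ∀ (n : ℕ) (p : ℝ × E × ℝ),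
      (List.Ico 1 (n + 1)).foldl (fun q s => R s q) p - p
        = ((ν (∑ s ∈ Finset.Icc 1 n, (αs s p.2.1 + p.2.2 * ν (sharps s)) •
              ((List.Ico (s + 1) (n + 1)).foldl (fun y j => refl j y) (cor s))),
            -(∑ s ∈ Finset.Icc 1 n, (αs s p.2.1 + p.2.2 * ν (sharps s)) •
              ((List.Ico (s + 1) (n + 1)).foldl (fun y j => refl j y) (cor s))),
            (0 : ℝ)) : ℝ × E × ℝ) := by
  intro n
  induction n with
  | zero =>
    intro p
    simp [List.Ico]
    rfl
  | succ n ih =>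
    rintro ⟨z, h, t⟩
    have hP := ih (z, h, t)
    set c : ℕ → ℝ := fun s => αs s (z, h, t).2.1 + (z, h, t).2.2 * ν (sharps s) with hc
    set v : ℕ → E := fun s =>
      (List.Ico (s + 1) (n + 1)).foldl (fun y j => refl j y) (cor s) with hv
    set Fn : E := ∑ s ∈ Finset.Icc 1 n, c s • v s with hFn
    have key : (∑ s ∈ Finset.Icc 1 (n + 1), c s •
          ((List.Ico (s + 1) (n + 1 + 1)).foldl (fun y j => refl j y) (cor s)))
        = Fn + (c (n + 1) - αs (n + 1) Fn) • cor (n + 1) := by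
      rw [Finset.sum_Icc_succ_top (by omega : 1 ≤ n + 1)]
      have h1 : ∀ s ∈ Finset.Icc 1 n,
          c s • ((List.Ico (s + 1) (n + 1 + 1)).foldl (fun y j => refl j y) (cor s))
            = c s • v s - (c s * αs (n + 1) (v s)) • cor (n + 1) := by
        intro s hs
        have hs' : s + 1 ≤ n + 1 := by
          simp only [Finset.mem_Icc] at hs; omega
        rw [List.Ico.succ_top hs', List.foldl_append]
        simp only [List.foldl_cons, List.foldl_nil, hrefl, hv]
        rw [smul_sub, smul_smul]
      rw [Finset.sum_congr rfl h1, Finset.sum_sub_distrib, ← Finset.sum_smul]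
      have h2 : (∑ s ∈ Finset.Icc 1 n, c s * αs (n + 1) (v s)) = αs (n + 1) Fn := by
        rw [hFn, map_sum]
        exact Finset.sum_congr rfl fun s _ => (map_smul (αs (n + 1)) (c s) (v s)).symm
      have h3 : (List.Ico (n + 1 + 1) (n + 1 + 1)).foldl (fun y j => refl j y) (cor (n + 1))
          = cor (n + 1) := by
        simp [List.Ico]
      rw [h2, h3, sub_smul]
      abel
    rw [key]
    have hIco : List.Ico 1 (n + 1 + 1) = List.Ico 1 (n + 1) ++ [n + 1] :=
      List.Ico.succ_top (by omega)
    rw [hIco, List.foldl_append]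
    set P := (List.Ico 1 (n + 1)).foldl (fun q s => R s q) (z, h, t) with hPdef
    have hPeq : P = ((z + ν Fn, h + -Fn, t + 0) : ℝ × E × ℝ) := by
      rw [sub_eq_iff_eq_add'] at hP
      rw [hP]
      rfl
    simp only [List.foldl_cons, List.foldl_nil, hR, hPeq]
    simp only [Prod.mk_sub_mk, Prod.smul_mk, Prod.mk.injEq, hc]
    simp only [map_add, map_neg, map_sub, map_smul, smul_eq_mul]
    refine ⟨by ring, ?_, by ring⟩
    module

/-- The action of a word `r_{(α_n,0)}⋯r_{(α_1,0)}` of affine reflections on `ℝ × E × ℝ`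
differs from the identity by `(ν(F), -F, 0)` with
`F = f_ν^{α₁,…,α_n}(z,h,t) = Σ_s (α_s(h) + t·ν(α_s♯)) · r_{α_n}⋯r_{α_{s+1}}(α_s∨)`. -/
theorem word_action_formula {E : Type*} [NormedAddCommGroup E] [InnerProductSpace ℝ E]
    (n : ℕ) (αs : ℕ → (E →ₗ[ℝ] ℝ)) (sharps : ℕ → E)
    (hsharp : ∀ s ∈ Finset.Icc 1 n, ∀ h : E, (inner ℝ h (sharps s) : ℝ) = αs s h)
    (hne : ∀ s ∈ Finset.Icc 1 n, sharps s ≠ 0)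
    (ν : E →ₗ[ℝ] ℝ)
    (cor : ℕ → E) (hcor : ∀ s, cor s = (2 / (inner ℝ (sharps s) (sharps s) : ℝ)) • sharps s)
    (refl : ℕ → E → E) (hrefl : ∀ s (x : E), refl s x = x - αs s x • cor s)
    (R : ℕ → ℝ × E × ℝ → ℝ × E × ℝ)
    (hR : ∀ s (p : ℝ × E × ℝ), R s p =
      p - (αs s p.2.1 + p.2.2 * ν (sharps s)) • ((-(ν (cor s)), cor s, 0) : ℝ × E × ℝ))
    (F : ℝ × E × ℝ → E)
    (hF : ∀ p : ℝ × E × ℝ, F p =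
      ∑ s ∈ Finset.Icc 1 n, (αs s p.2.1 + p.2.2 * ν (sharps s)) •
        ((List.Ico (s + 1) (n + 1)).foldl (fun y j => refl j y) (cor s))) :
    ∀ p : ℝ × E × ℝ,
      (List.Ico 1 (n + 1)).foldl (fun q s => R s q) p - p
        = ((ν (F p), -F p, 0) : ℝ × E × ℝ) := by
  intro p
  rw [hF]
  exact word_action_aux αs ν sharps cor refl hrefl R hR n p
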